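/- The Hermite coefficients of the soft-thresholding function η_s(x,t) := sign(x)·(|x|−t)₊ with threshold t ≥ 0 satisfy: a₀ = 0, a₁ = 1 − erf(t/√2), a_k = 0 for all even k ≥ 2, and a_k = √(2/(k(k−1)π)) e^{−t²/2} h_{k−2}(t) for all odd k ≥ 3, where a_k := ∫ η_s(x,t) h_k(x) φ(x) dx and {h_k} are the orthonormal Hermite polynomials under the standard Gaussian density φ. -/

import Mathlib

open Polynomial MeasureTheory Real Filter Set Asymptotics Topology


/-- The orthonormal Hermite polynomial `h_k` under the standard Gaussian density. -/
noncomputable def hermiteNormalized (k : ℕ) (x : ℝ) : ℝ :=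
  ((Polynomial.hermite k).map (Int.castRingHom ℝ)).eval x / Real.sqrt (Nat.factorial k)

/-- The standard Gaussian density `φ(x) = (2π)^{-1/2} e^{-x²/2}`. -/
noncomputable def gaussianDensity (x : ℝ) : ℝ :=
  (Real.sqrt (2 * Real.pi))⁻¹ * Real.exp (-x ^ 2 / 2)

/-- The Gauss error function `erf`. -/
noncomputable def erf (x : ℝ) : ℝ :=
  (2 / Real.sqrt Real.pi) * ∫ s in (0 : ℝ)..x, Real.exp (-s ^ 2)

/-- The soft-thresholding function `η_s(x,t) = sign(x)·(|x|−t)₊`. -/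
noncomputable def softThreshold (x t : ℝ) : ℝ := Real.sign x * max (|x| - t) 0

noncomputable def Hp (n : ℕ) : Polynomial ℝ := (Polynomial.hermite n).map (Int.castRingHom ℝ)
noncomputable def gs (x : ℝ) : ℝ := Real.exp (-(x ^ 2 / 2))

lemma Hp_eval_eq_aeval (n : ℕ) (x : ℝ) : (Hp n).eval x = aeval x (hermite n) := by
  rw [Hp, eval_map, aeval_def, algebraMap_int_eq]

lemma gs_contDiff : ContDiff ℝ (⊤ : ℕ∞) gs :=
  Real.contDiff_exp.comp (((contDiff_id.pow 2).div_const 2).neg)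

lemma gs_deriv_iter (n : ℕ) (x : ℝ) :
    (Hp n).eval x * gs x = (-1 : ℝ) ^ n * deriv^[n] gs x := by
  have h := Polynomial.deriv_gaussian_eq_hermite_mul_gaussian n x
  have hg : (fun y : ℝ => Real.exp (-(y ^ 2 / 2))) = gs := rfl
  rw [hg] at h
  rw [Hp_eval_eq_aeval, h]
  have : (-1 : ℝ) ^ n * (-1 : ℝ) ^ n = 1 := by
    rw [← pow_add]; exact Even.neg_one_pow ⟨n, rfl⟩
  simp only [gs]
  linear_combination (-(aeval x) (hermite n) * Real.exp (-(x ^ 2 / 2))) * this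

lemma hasDerivAt_Hg (n : ℕ) (x : ℝ) :
    HasDerivAt (fun x => (Hp n).eval x * gs x) (-((Hp (n + 1)).eval x * gs x)) x := by
  have hfun : (fun x => (Hp n).eval x * gs x) = fun x => (-1 : ℝ) ^ n * deriv^[n] gs x :=
    funext fun x => gs_deriv_iter n x
  have hsmooth : ContDiff ℝ (⊤ : ℕ∞) (deriv^[n] gs) := ContDiff.iterate_deriv n gs_contDiff
  have hd : HasDerivAt (deriv^[n] gs) (deriv^[n + 1] gs x) x := by
    have h1 := ((hsmooth.differentiable (by simp)) x).hasDerivAt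
    rwa [Function.iterate_succ_apply']
  have h2 := hd.const_mul ((-1 : ℝ) ^ n)
  rw [hfun]
  refine h2.congr_deriv ?_
  rw [gs_deriv_iter (n + 1) x] at *
  ring

lemma tendsto_poly_gs (p : Polynomial ℝ) :
    Tendsto (fun x => p.eval x * gs x) atTop (𝓝 0) := by
  have h0 : Tendsto (fun x : ℝ => x ^ (p.natDegree : ℝ) * Real.exp (-(1/2 : ℝ) * x ^ 2))
      atTop (𝓝 0) :=
    (rpow_mul_exp_neg_mul_sq_isLittleO_exp_neg one_half_pos _).tendsto_zero_of_tendsto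
      (Real.tendsto_exp_atBot.comp
        (tendsto_id.const_mul_atTop_of_neg (neg_lt_zero.mpr one_half_pos)))
  have h1 : (fun x : ℝ => p.eval x) =O[atTop]
      fun x => ((X : Polynomial ℝ) ^ p.natDegree).eval x :=
    Polynomial.isBigO_of_degree_le (P := p) ((X : Polynomial ℝ) ^ p.natDegree) (by
      simpa using Polynomial.degree_le_natDegree (p := p))
  have hbig : (fun x => p.eval x * gs x) =O[atTop]
      fun x : ℝ => x ^ (p.natDegree : ℝ) * Real.exp (-(1/2 : ℝ) * x ^ 2) := by
    refine (h1.mul (isBigO_refl gs atTop)).congr' (EventuallyEq.rfl) ?_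
    refine Eventually.of_forall fun x => ?_
    simp only [eval_pow, eval_X, gs, Real.rpow_natCast]
    rw [show -(1/2 : ℝ) * x ^ 2 = -(x ^ 2 / 2) by ring]
  exact hbig.trans_tendsto h0

lemma integrable_poly_gs (p : Polynomial ℝ) :
    Integrable (fun x => p.eval x * gs x) := by
  induction p using Polynomial.induction_on' with
  | add p q hp hq => simpa [add_mul] using
      (hp.add hq : Integrable (fun x => p.eval x * gs x + q.eval x * gs x))
  | monomial n a =>
    have h : Integrable (fun x : ℝ => x ^ (n : ℝ) * Real.exp (-(1/2 : ℝ) * x ^ 2)) :=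
      integrable_rpow_mul_exp_neg_mul_sq one_half_pos
        (lt_of_lt_of_le neg_one_lt_zero (Nat.cast_nonneg n))
    refine (h.const_mul a).congr (Eventually.of_forall fun x => ?_)
    simp only [eval_monomial, gs, Real.rpow_natCast]
    rw [show -(1/2 : ℝ) * x ^ 2 = -(x ^ 2 / 2) by ring]
    ring

lemma Hp_eval_neg (n : ℕ) (x : ℝ) : (Hp n).eval (-x) = (-1 : ℝ) ^ n * (Hp n).eval x := by
  induction n generalizing x with
  | zero => simp [Hp, hermite_zero]
  | succ n ih =>
    have hmap : Hp (n + 1) = X * Hp n - (Hp n).derivative := by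
      rw [Hp, hermite_succ, Polynomial.map_sub, Polynomial.map_mul, map_X, Hp, derivative_map]
    have hder : (Hp n).derivative.eval (-x) = (-1 : ℝ) ^ (n + 1) * (Hp n).derivative.eval x := by
      have h1 : HasDerivAt (fun z : ℝ => (Hp n).eval (-z))
          ((Hp n).derivative.eval (-x) * (-1)) x :=
        ((Hp n).hasDerivAt (-x)).comp x (hasDerivAt_neg x)
      have h2 : HasDerivAt (fun z : ℝ => (-1 : ℝ) ^ n * (Hp n).eval z)
          ((-1 : ℝ) ^ n * (Hp n).derivative.eval x) x := ((Hp n).hasDerivAt x).const_mul _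
      have hfe : (fun z : ℝ => (Hp n).eval (-z)) = fun z => (-1 : ℝ) ^ n * (Hp n).eval z :=
        funext fun z => ih z
      rw [hfe] at h1
      have h3 := h1.unique h2
      rw [pow_succ]
      linear_combination -h3
    rw [hmap]
    simp only [eval_sub, eval_mul, eval_X, ih x, hder]
    rw [pow_succ]
    ring

lemma st_eq {t : ℝ} (ht : 0 ≤ t) (x : ℝ) :
    softThreshold x t = max (x - t) 0 - max (-x - t) 0 := by
  rcases lt_trichotomy x 0 with h | h | h
  · rw [softThreshold, Real.sign_of_neg h, abs_of_neg h,
      max_eq_right (by linarith : x - t ≤ 0)]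
    ring
  · subst h
    simp [softThreshold, max_eq_right (by linarith : (0:ℝ) - t ≤ 0),
      max_eq_right (by linarith : -(0:ℝ) - t ≤ 0)]
  · rw [softThreshold, Real.sign_of_pos h, abs_of_pos h,
      max_eq_right (by linarith : -x - t ≤ 0)]
    ring

lemma st_neg {t : ℝ} (ht : 0 ≤ t) (x : ℝ) :
    softThreshold (-x) t = -softThreshold x t := by
  rw [st_eq ht, st_eq ht, neg_neg]
  ring

lemma st_abs_le {t : ℝ} (ht : 0 ≤ t) (x : ℝ) : |softThreshold x t| ≤ |x| := by
  rw [softThreshold, abs_mul]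
  have h1 : |Real.sign x| ≤ 1 := by
    rcases lt_trichotomy x 0 with h | h | h
    · rw [Real.sign_of_neg h]; norm_num
    · subst h; simp
    · rw [Real.sign_of_pos h]; norm_num
  have h2 : |max (|x| - t) 0| ≤ |x| := by
    rw [abs_of_nonneg (le_max_right _ _)]
    exact max_le (by linarith [abs_nonneg x]) (abs_nonneg x)
  calc |Real.sign x| * |max (|x| - t) 0| ≤ 1 * |x| :=
        mul_le_mul h1 h2 (abs_nonneg _) zero_le_one
    _ = |x| := one_mul _

lemma st_continuous {t : ℝ} (ht : 0 ≤ t) : Continuous (fun x => softThreshold x t) := by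
  have : (fun x => softThreshold x t) = fun x => max (x - t) 0 - max (-x - t) 0 :=
    funext (st_eq ht)
  rw [this]
  exact ((continuous_id.sub continuous_const).max continuous_const).sub
    ((continuous_neg.sub continuous_const).max continuous_const)

lemma gs_continuous : Continuous gs :=
  Real.continuous_exp.comp (((continuous_id.pow 2).div_const 2).neg)

lemma integrable_st_poly_gs {t : ℝ} (ht : 0 ≤ t) (p : Polynomial ℝ) :
    Integrable (fun x => softThreshold x t * p.eval x * gs x) := by
  have hcont : Continuous (fun x => softThreshold x t * p.eval x * gs x) :=
    ((st_continuous ht).mul p.continuous).mul gs_continuous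
  refine Integrable.mono' ((integrable_poly_gs ((X : Polynomial ℝ) * p)).abs)
    hcont.aestronglyMeasurable (Eventually.of_forall fun x => ?_)
  simp only [Real.norm_eq_abs, eval_mul, eval_X, abs_mul]
  exact mul_le_mul_of_nonneg_right
    (mul_le_mul_of_nonneg_right (st_abs_le ht x) (abs_nonneg _)) (abs_nonneg _)

lemma integrable_sub_mul_poly_gs (t : ℝ) (p : Polynomial ℝ) :
    Integrable (fun x => (x - t) * (p.eval x * gs x)) := by
  refine (integrable_poly_gs ((X - C t) * p)).congr (Eventually.of_forall fun x => ?_)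
  simp only [eval_mul, eval_sub, eval_X, eval_C]
  ring

lemma tendsto_sub_mul_poly_gs (t : ℝ) (p : Polynomial ℝ) :
    Tendsto (fun x => (x - t) * (p.eval x * gs x)) atTop (𝓝 0) := by
  refine (tendsto_poly_gs ((X - C t) * p)).congr fun x => ?_
  simp only [eval_mul, eval_sub, eval_X, eval_C]
  ring

lemma int_Ioi_Hg (n : ℕ) (c : ℝ) :
    ∫ x in Ioi c, (Hp (n + 1)).eval x * gs x = (Hp n).eval c * gs c := by
  have h := integral_Ioi_of_hasDerivAt_of_tendsto'
    (f := fun x => -((Hp n).eval x * gs x))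
    (f' := fun x => (Hp (n + 1)).eval x * gs x) (a := c) (m := 0)
    (fun x _ => (hasDerivAt_Hg n x).neg.congr_deriv (neg_neg _))
    (integrable_poly_gs _).integrableOn
    (by simpa using (tendsto_poly_gs (Hp n)).neg)
  simpa using h

lemma int_Ioi_xsub_Hg (n : ℕ) (t : ℝ) :
    ∫ x in Ioi t, (x - t) * ((Hp (n + 2)).eval x * gs x) = (Hp n).eval t * gs t := by
  have h := integral_Ioi_of_hasDerivAt_of_tendsto'
    (f := fun x => -((x - t) * ((Hp (n + 1)).eval x * gs x)) - (Hp n).eval x * gs x)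
    (f' := fun x => (x - t) * ((Hp (n + 2)).eval x * gs x)) (a := t) (m := 0)
    (fun x _ => by
      have h1 : HasDerivAt (fun x : ℝ => x - t) 1 x := (hasDerivAt_id x).sub_const t
      have h3 := ((h1.mul (hasDerivAt_Hg (n + 1) x)).neg).sub (hasDerivAt_Hg n x)
      refine h3.congr_deriv ?_
      ring)
    (integrable_sub_mul_poly_gs t _).integrableOn
    (by
      have := ((tendsto_sub_mul_poly_gs t (Hp (n + 1))).neg).sub (tendsto_poly_gs (Hp n))
      simpa using this)
  simp only [sub_self, zero_mul, neg_zero, zero_sub, neg_neg, neg_sub] at h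
  rw [h]

lemma Hp_zero_eval (x : ℝ) : (Hp 0).eval x = 1 := by simp [Hp, hermite_zero]
lemma Hp_one_eval (x : ℝ) : (Hp 1).eval x = x := by simp [Hp, hermite_one]

lemma integrable_gs : Integrable gs := by
  have := integrable_poly_gs (1 : Polynomial ℝ)
  simpa using this

lemma int_Ioi_x_gs (t : ℝ) :
    ∫ x in Ioi t, (x - t) * ((Hp 1).eval x * gs x) = ∫ x in Ioi t, gs x := by
  have hgs : ∀ x : ℝ, HasDerivAt gs (-(x * gs x)) x := by
    intro x
    have h0 := hasDerivAt_Hg 0 x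
    simp only [zero_add, Hp_zero_eval, Hp_one_eval, one_mul] at h0
    exact h0
  have hA : Integrable (fun x => (x - t) * (x * gs x)) := by
    have := integrable_sub_mul_poly_gs t (X : Polynomial ℝ)
    simpa [eval_X] using this
  have h := integral_Ioi_of_hasDerivAt_of_tendsto'
    (f := fun x => -((x - t) * gs x))
    (f' := fun x => (x - t) * (x * gs x) - gs x) (a := t) (m := 0)
    (fun x _ => by
      have h1 : HasDerivAt (fun x : ℝ => x - t) 1 x := (hasDerivAt_id x).sub_const t
      have h3 := (h1.mul (hgs x)).neg
      refine h3.congr_deriv ?_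
      ring)
    ((hA.sub integrable_gs).integrableOn)
    (by
      have h4 : Tendsto (fun x => (x - t) * gs x) atTop (𝓝 0) := by
        have := tendsto_sub_mul_poly_gs t (1 : Polynomial ℝ)
        simpa using this
      simpa using h4.neg)
  simp only [sub_self, zero_mul, neg_zero, zero_sub, neg_neg] at h
  rw [integral_sub hA.integrableOn integrable_gs.integrableOn] at h
  simp only [Hp_one_eval]
  linarith [h]

lemma int_Ioi_gs {t : ℝ} (ht : 0 ≤ t) :
    ∫ x in Ioi t, gs x
      = Real.sqrt (2 * π) / 2 - Real.sqrt 2 * ∫ s in (0:ℝ)..(t / Real.sqrt 2), Real.exp (-s ^ 2) := by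
  have hsplit : (∫ x in Ioc 0 t, gs x) + ∫ x in Ioi t, gs x = ∫ x in Ioi 0, gs x := by
    rw [← setIntegral_union (Ioc_disjoint_Ioi le_rfl) measurableSet_Ioi
      integrable_gs.integrableOn integrable_gs.integrableOn, Ioc_union_Ioi_eq_Ioi ht]
  have hIoi0 : ∫ x in Ioi (0:ℝ), gs x = Real.sqrt (2 * π) / 2 := by
    have h := integral_gaussian_Ioi (1/2)
    simp only [show ∀ x : ℝ, -(1/2 : ℝ) * x ^ 2 = -(x ^ 2 / 2) from fun x => by ring] at h
    rw [show π / (1/2 : ℝ) = 2 * π by ring] at h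
    exact h
  have hs2 : (Real.sqrt 2) ≠ 0 := by positivity
  have hIoc : ∫ x in Ioc 0 t, gs x
      = Real.sqrt 2 * ∫ s in (0:ℝ)..(t / Real.sqrt 2), Real.exp (-s ^ 2) := by
    rw [← intervalIntegral.integral_of_le ht]
    have h := intervalIntegral.integral_comp_mul_left (a := (0:ℝ)) (b := t / Real.sqrt 2)
      (c := Real.sqrt 2) (f := gs) hs2
    have h2 : ∀ x : ℝ, gs (Real.sqrt 2 * x) = Real.exp (-x ^ 2) := by
      intro x
      rw [gs, mul_pow, Real.sq_sqrt (by norm_num : (0:ℝ) ≤ 2),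
        show -(2 * x ^ 2 / 2) = -x ^ 2 by ring]
    simp only [h2, mul_zero, mul_div_cancel₀ _ hs2, smul_eq_mul] at h
    rw [h]
    field_simp
  linarith [hsplit, hIoc, hIoi0]

lemma gs_neg (x : ℝ) : gs (-x) = gs x := by rw [gs, gs, neg_sq]

lemma reduce_odd {t : ℝ} (ht : 0 ≤ t) {k : ℕ} (hk : Odd k) :
    ∫ x, softThreshold x t * (Hp k).eval x * gs x
      = 2 * ∫ x in Ioi t, (x - t) * ((Hp k).eval x * gs x) := by
  set F := fun x => softThreshold x t * (Hp k).eval x * gs x with hF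
  have hInt : Integrable F := integrable_st_poly_gs ht (Hp k)
  have hEven : ∀ x, F (-x) = F x := by
    intro x
    simp only [hF, st_neg ht, Hp_eval_neg, gs_neg, hk.neg_one_pow]
    ring
  have h1 : ∫ x in Iic (0:ℝ), F x = ∫ x in Ioi (0:ℝ), F x := by
    have h := integral_comp_neg_Ioi 0 F
    rw [neg_zero] at h
    rw [← h]
    exact setIntegral_congr_fun measurableSet_Ioi fun x _ => hEven x
  have h2 : ∫ x, F x = (∫ x in Iic (0:ℝ), F x) + ∫ x in Ioi (0:ℝ), F x :=
    (intervalIntegral.integral_Iic_add_Ioi hInt.integrableOn hInt.integrableOn).symm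
  have h3 : ∫ x in Ioi (0:ℝ), F x = (∫ x in Ioc 0 t, F x) + ∫ x in Ioi t, F x := by
    rw [← setIntegral_union (Ioc_disjoint_Ioi le_rfl) measurableSet_Ioi
      hInt.integrableOn hInt.integrableOn, Ioc_union_Ioi_eq_Ioi ht]
  have h4 : ∫ x in Ioc 0 t, F x = 0 := by
    rw [setIntegral_congr_fun measurableSet_Ioc (g := fun _ => (0:ℝ))
      (fun x hx => by
        simp only [hF, st_eq ht, max_eq_right (by linarith [hx.2] : x - t ≤ 0),
          max_eq_right (by linarith [hx.1] : -x - t ≤ 0)]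
        ring)]
    simp
  have h5 : ∫ x in Ioi t, F x = ∫ x in Ioi t, (x - t) * ((Hp k).eval x * gs x) := by
    refine setIntegral_congr_fun measurableSet_Ioi fun x hx => ?_
    have hx' : t < x := hx
    simp only [hF, st_eq ht, max_eq_left (by linarith : (0:ℝ) ≤ x - t),
      max_eq_right (by linarith : -x - t ≤ 0)]
    ring
  rw [h2, h1, h3, h4, h5]
  ring

lemma int_even_zero {t : ℝ} (ht : 0 ≤ t) {k : ℕ} (hk : Even k) :
    ∫ x, softThreshold x t * (Hp k).eval x * gs x = 0 := by
  set F := fun x => softThreshold x t * (Hp k).eval x * gs x with hF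
  have hOdd : ∀ x, F (-x) = -F x := by
    intro x
    simp only [hF, st_neg ht, Hp_eval_neg, gs_neg, hk.neg_one_pow]
    ring
  have h := integral_neg_eq_self F (volume : Measure ℝ)
  simp only [hOdd] at h
  rw [integral_neg] at h
  linarith [h]

lemma exp_eq_gs : ∀ x : ℝ, Real.exp (-x ^ 2 / 2) = gs x := fun x => by rw [gs, neg_div]

lemma map_eq_Hp (n : ℕ) : (Polynomial.hermite n).map (Int.castRingHom ℝ) = Hp n := rfl

/-- Hermite coefficients of soft thresholding: `a₀ = 0`, `a₁ = 1 − erf(t/√2)`,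
`a_k = 0` for even `k ≥ 2`, and
`a_k = √(2/(k(k−1)π)) e^{−t²/2} h_{k−2}(t)` for odd `k ≥ 3`. -/
theorem softThreshold_hermite_coeffs (t : ℝ) (ht : 0 ≤ t)
    (a : ℕ → ℝ)
    (ha : ∀ k, a k = ∫ x : ℝ, softThreshold x t * hermiteNormalized k x * gaussianDensity x) :
    a 0 = 0 ∧
    a 1 = 1 - erf (t / Real.sqrt 2) ∧
    (∀ k : ℕ, Even k → 2 ≤ k → a k = 0) ∧
    (∀ k : ℕ, Odd k → 3 ≤ k →
      a k = Real.sqrt (2 / ((k : ℝ) * ((k : ℝ) - 1) * Real.pi)) * Real.exp (-t ^ 2 / 2) *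
              hermiteNormalized (k - 2) t) := by
  have key : ∀ k, a k = (Real.sqrt (Nat.factorial k))⁻¹ * (Real.sqrt (2 * π))⁻¹
      * ∫ x, softThreshold x t * (Hp k).eval x * gs x := by
    intro k
    rw [ha k]
    have hpt : ∀ x, softThreshold x t * hermiteNormalized k x * gaussianDensity x
        = (Real.sqrt (Nat.factorial k))⁻¹ * (Real.sqrt (2 * π))⁻¹
          * (softThreshold x t * (Hp k).eval x * gs x) := by
      intro x
      simp only [hermiteNormalized, gaussianDensity, Hp, gs, neg_div]
      ring
    simp_rw [hpt]
    rw [integral_const_mul]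
  refine ⟨?_, ?_, ?_, ?_⟩
  · rw [key 0, int_even_zero ht ⟨0, rfl⟩]; ring
  · rw [key 1, reduce_odd ht odd_one, int_Ioi_x_gs, int_Ioi_gs ht, erf]
    have h1 : Real.sqrt ((Nat.factorial 1 : ℕ) : ℝ) = 1 := by
      norm_num [Nat.factorial_one]
    rw [h1]
    rw [Real.sqrt_mul (by norm_num : (0:ℝ) ≤ 2) π]
    have h2 : (0:ℝ) < Real.sqrt 2 := by positivity
    have h3 : (0:ℝ) < Real.sqrt π := Real.sqrt_pos.mpr Real.pi_pos
    field_simp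
  · intro k hk _
    rw [key k, int_even_zero ht hk]; ring
  · intro k hk hk3
    obtain ⟨n, rfl⟩ : ∃ n, k = n + 2 := ⟨k - 2, by omega⟩
    rw [key (n + 2), reduce_odd ht hk, int_Ioi_xsub_Hg n t]
    simp only [Nat.add_sub_cancel, hermiteNormalized, exp_eq_gs, map_eq_Hp]
    have hfact : ((Nat.factorial (n + 2) : ℕ) : ℝ)
        = ((n:ℝ) + 2) * ((n:ℝ) + 1) * ((Nat.factorial n : ℕ) : ℝ) := by
      rw [Nat.factorial_succ, Nat.factorial_succ]
      push_cast
      ring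
    have hK : ((n + 2 : ℕ) : ℝ) = (n : ℝ) + 2 := by push_cast; ring
    have hC : (Real.sqrt ((Nat.factorial (n + 2) : ℕ) : ℝ))⁻¹ * (Real.sqrt (2 * π))⁻¹ * 2
        = Real.sqrt (2 / (((n + 2 : ℕ) : ℝ) * (((n + 2 : ℕ) : ℝ) - 1) * π))
          * (Real.sqrt ((Nat.factorial n : ℕ) : ℝ))⁻¹ := by
      have hfn : (0:ℝ) < ((Nat.factorial n : ℕ) : ℝ) := by
        exact_mod_cast Nat.factorial_pos n
      have hf2 : (0:ℝ) < ((Nat.factorial (n + 2) : ℕ) : ℝ) := by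
        exact_mod_cast Nat.factorial_pos (n + 2)
      have hπ : (0:ℝ) < π := Real.pi_pos
      have harg : (0:ℝ) ≤ 2 / (((n + 2 : ℕ) : ℝ) * (((n + 2 : ℕ) : ℝ) - 1) * π) := by
        rw [hK]
        have : (0:ℝ) < ((n:ℝ) + 2) * ((n:ℝ) + 2 - 1) * π := by
          have hn : (0:ℝ) ≤ (n:ℝ) := Nat.cast_nonneg n
          nlinarith
        positivity
      have hL : (0:ℝ) ≤ (Real.sqrt ((Nat.factorial (n + 2) : ℕ) : ℝ))⁻¹
          * (Real.sqrt (2 * π))⁻¹ * 2 := by positivity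
      have hR : (0:ℝ) ≤ Real.sqrt (2 / (((n + 2 : ℕ) : ℝ) * (((n + 2 : ℕ) : ℝ) - 1) * π))
          * (Real.sqrt ((Nat.factorial n : ℕ) : ℝ))⁻¹ := by positivity
      refine (sq_eq_sq₀ hL hR).mp ?_
      rw [mul_pow, mul_pow, mul_pow, inv_pow, inv_pow, inv_pow,
        Real.sq_sqrt hf2.le, Real.sq_sqrt (by positivity : (0:ℝ) ≤ 2 * π),
        Real.sq_sqrt harg, Real.sq_sqrt hfn.le, hfact, hK]
      have hn : (0:ℝ) ≤ (n:ℝ) := Nat.cast_nonneg n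
      have h1 : ((n:ℝ) + 2) * ((n:ℝ) + 2 - 1) = ((n:ℝ) + 2) * ((n:ℝ) + 1) := by ring
      rw [h1]
      field_simp
    linear_combination ((Hp n).eval t * gs t) * hC
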